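/- Let M ∈ ℕ, p ∈ [1,∞), and let K ⊆ [0,1]^M be a closed convex set. On the interval (0,M), define Π(u) = (∫_{i-1}^{i} u dλ)_{i=1}^M and let D_K be the set of all u ∈ L^p(0,M) such that u has a representative v : (0,M) → ℝ with v(t) ∈ {0,1} for all t, pointwise total variation Var(v;(0,M)) ≤ M, and Π(u) ∈ K. Then D_K is closed in L^p(0,M). -/

import Mathlib

open MeasureTheory Set Filter
open scoped ENNReal
open scoped Topology

lemma evar_le_of_approx {S T : Set ℝ} {v w : ℝ → ℝ}
    (hP : ∀ t ∈ T, ∀ δ : ℝ, 0 < δ → ∃ s, s ∈ S ∧ t - δ < s ∧ s ≤ t ∧ v s = w t) :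
    eVariationOn w T ≤ eVariationOn v S := by
  classical
  apply iSup_le
  rintro ⟨n, u, hu, us⟩
  let σ : ℕ → ℝ := fun i => Nat.rec (Classical.choose (hP (u 0) (us 0) 1 one_pos))
    (fun i x => if h : x < u (i + 1) then
      Classical.choose (hP (u (i + 1)) (us (i + 1)) (u (i + 1) - x) (sub_pos.mpr h))
    else x) i
  have hstep : ∀ i, σ (i + 1) = @dite _ (σ i < u (i + 1)) (Classical.propDecidable _)
      (fun h => Classical.choose (hP (u (i + 1)) (us (i + 1)) (u (i + 1) - σ i) (sub_pos.mpr h)))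
      (fun _ => σ i) := fun i => rfl
  have inv : ∀ i, σ i ∈ S ∧ σ i ≤ u i ∧ v (σ i) = w (u i) := by
    intro i
    induction i with
    | zero =>
      obtain ⟨h1, h2, h3, h4⟩ := Classical.choose_spec (hP (u 0) (us 0) 1 one_pos)
      exact ⟨h1, h3, h4⟩
    | succ i ih =>
      rcases lt_or_ge (σ i) (u (i + 1)) with h | hge
      · rw [hstep i, dif_pos h]
        obtain ⟨h1, h2, h3, h4⟩ :=
          Classical.choose_spec (hP (u (i + 1)) (us (i + 1)) (u (i + 1) - σ i) (sub_pos.mpr h))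
        exact ⟨h1, h3, h4⟩
      · rw [hstep i, dif_neg (not_lt.2 hge)]
        have h5 : u (i + 1) ≤ σ i := hge
        have h6 : u i ≤ u (i + 1) := hu (Nat.le_succ i)
        have h7 : u (i + 1) = u i := le_antisymm (by linarith [ih.2.1]) h6
        exact ⟨ih.1, by linarith [ih.2.1], by rw [h7]; exact ih.2.2⟩
  have hmono : Monotone σ := by
    apply monotone_nat_of_le_succ
    intro i
    rcases lt_or_ge (σ i) (u (i + 1)) with h | hge
    · rw [hstep i, dif_pos h]
      obtain ⟨h1, h2, h3, h4⟩ :=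
        Classical.choose_spec (hP (u (i + 1)) (us (i + 1)) (u (i + 1) - σ i) (sub_pos.mpr h))
      linarith
    · rw [hstep i, dif_neg (not_lt.2 hge)]
  calc ∑ i ∈ Finset.range n, edist (w (u (i + 1))) (w (u i))
      = ∑ i ∈ Finset.range n, edist (v (σ (i + 1))) (v (σ i)) := by
        refine Finset.sum_congr rfl fun i _ => ?_
        rw [(inv (i + 1)).2.2, (inv i).2.2]
    _ ≤ eVariationOn v S := eVariationOn.sum_le (f := v) (n := n) hmono fun i => (inv i).1

set_option synthInstance.maxHeartbeats 1000000
set_option maxHeartbeats 2000000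

/-- The projection on `L^p(0,M)` given by `Π(u)_i = ∫_{i-1}^i u dλ`. -/
noncomputable def projK (M : ℕ) (p : ℝ≥0∞)
    (u : Lp ℝ p (volume.restrict (Ioo (0:ℝ) (M:ℝ)))) : Fin M → ℝ :=
  fun i => ∫ t in Ioo ((i:ℕ):ℝ) (((i:ℕ):ℝ)+1), (u : ℝ → ℝ) t
    ∂(volume.restrict (Ioo (0:ℝ) (M:ℝ)))

/-- The set `D_K` of Example 3.5: binary controls on `(0,M)` with pointwise
total variation at most `M` whose vector of interval averages lies in `K`. -/
def DK (M : ℕ) (p : ℝ≥0∞) (K : Set (Fin M → ℝ)) :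
    Set (Lp ℝ p (volume.restrict (Ioo (0:ℝ) (M:ℝ)))) :=
  {u | (∃ v : ℝ → ℝ,
      ((u : ℝ → ℝ) =ᵐ[volume.restrict (Ioo (0:ℝ) (M:ℝ))] v) ∧
      (∀ t ∈ Ioo (0:ℝ) (M:ℝ), v t = 0 ∨ v t = 1) ∧
      eVariationOn v (Ioo (0:ℝ) (M:ℝ)) ≤ (M : ℝ≥0∞)) ∧
    projK M p u ∈ K}

/-- verification of (D2) in Example 3.5: the set `D_K` is
closed in `L^p(0,M)` for every closed convex `K ⊆ [0,1]^M`. -/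
theorem stmt_10
    (M : ℕ) (hM : 0 < M) (p : ℝ≥0∞) [Fact (1 ≤ p)] (hp : p ≠ ⊤)
    (K : Set (Fin M → ℝ)) (hK_closed : IsClosed K) (hK_convex : Convex ℝ K)
    (hK_sub : K ⊆ Icc (0 : Fin M → ℝ) 1) :
    IsClosed (DK M p K) := by
  classical
  set μ := volume.restrict (Ioo (0:ℝ) (M:ℝ)) with hμdef
  haveI : IsFiniteMeasure μ := by
    constructor
    rw [hμdef, Measure.restrict_apply_univ]
    exact measure_Ioo_lt_top
  apply IsSeqClosed.isClosed
  intro f u hf hconv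
  -- L¹ convergence
  have hL1 : Tendsto (fun n => eLpNorm (⇑(f n) - ⇑u) 1 μ) atTop (𝓝 0) := by
    have hp1 : Tendsto (fun n => eLpNorm (⇑(f n) - ⇑u) p μ) atTop (𝓝 0) :=
      (Lp.tendsto_Lp_iff_tendsto_eLpNorm' f u).mp hconv
    have hple : (1:ℝ≥0∞) ≤ p := Fact.out
    have hexp : (0:ℝ) ≤ 1 / (1:ℝ≥0∞).toReal - 1 / p.toReal := by
      simp only [ENNReal.toReal_one]
      have h1 : (1:ℝ) ≤ p.toReal := by
        have := ENNReal.toReal_mono hp hple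
        simpa using this
      have h2 : 0 < p.toReal := by linarith
      have h3 : 1 / p.toReal ≤ 1 := by
        rw [div_le_one h2]; linarith
      linarith
    have hc : (μ univ) ^ (1 / (1:ℝ≥0∞).toReal - 1 / p.toReal) ≠ ∞ :=
      ENNReal.rpow_ne_top_of_nonneg hexp (measure_ne_top μ univ)
    have hb : ∀ n, eLpNorm (⇑(f n) - ⇑u) 1 μ ≤
        eLpNorm (⇑(f n) - ⇑u) p μ * (μ univ) ^ (1 / (1:ℝ≥0∞).toReal - 1 / p.toReal) :=
      fun n => eLpNorm_le_eLpNorm_mul_rpow_measure_univ hple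
        ((Lp.aestronglyMeasurable (f n)).sub (Lp.aestronglyMeasurable u))
    have h2 := ENNReal.Tendsto.mul_const hp1 (Or.inr hc)
    rw [zero_mul] at h2
    exact tendsto_of_tendsto_of_tendsto_of_le_of_le tendsto_const_nhds h2
      (fun n => zero_le) hb
  have hint : ∀ g : Lp ℝ p μ, Integrable (⇑g) μ := fun g =>
    (Lp.memLp g).integrable Fact.out
  have hproj : Tendsto (fun n => projK M p (f n)) atTop (𝓝 (projK M p u)) := by
    rw [tendsto_pi_nhds]
    intro i
    exact tendsto_setIntegral_of_L1 (⇑u) (hint u).aestronglyMeasurable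
      (Eventually.of_forall fun n => hint (f n))
      (by simpa only [eLpNorm_one_eq_lintegral_enorm, Pi.sub_apply] using hL1)
      (Ioo ((i:ℕ):ℝ) (((i:ℕ):ℝ)+1))
  have hKin : projK M p u ∈ K :=
    hK_closed.mem_of_tendsto hproj (Eventually.of_forall fun n => (hf n).2)
  -- a.e. convergent subsequence and representatives
  obtain ⟨ns, hns, hae⟩ := (tendstoInMeasure_of_tendsto_Lp hconv).exists_seq_tendsto_ae
  choose v hvae hvval hvvar using fun n => (hf n).1
  have hfull : ∀ᵐ x ∂μ, (∀ k, ⇑(f (ns k)) x = v (ns k) x) ∧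
      Tendsto (fun k => ⇑(f (ns k)) x) atTop (𝓝 (⇑u x)) :=
    (ae_all_iff.mpr fun k => hvae (ns k)).and hae
  set S : Set ℝ := Ioo (0:ℝ) (M:ℝ) ∩ {x | (∀ k, ⇑(f (ns k)) x = v (ns k) x) ∧
      Tendsto (fun k => ⇑(f (ns k)) x) atTop (𝓝 (⇑u x))} with hSdef
  have hSsub : S ⊆ Ioo (0:ℝ) (M:ℝ) := inter_subset_left
  have hnull : volume (Ioo (0:ℝ) (M:ℝ) \ S) = 0 := by
    have h0 := hfull
    rw [ae_iff, hμdef, Measure.restrict_apply' measurableSet_Ioo] at h0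
    refine measure_mono_null (fun x hx => ?_) h0
    exact ⟨fun hPx => hx.2 ⟨hx.1, hPx⟩, hx.1⟩
  have htendS : ∀ x ∈ S, Tendsto (fun k => v (ns k) x) atTop (𝓝 (⇑u x)) :=
    fun x hx => hx.2.2.congr fun k => hx.2.1 k
  have hacc : ∀ t ∈ Ioo (0:ℝ) (M:ℝ), ∀ δ : ℝ, 0 < δ → ∃ s, s ∈ S ∧ t - δ < s ∧ s < t := by
    intro t ht δ hδ
    by_contra hcon
    push_neg at hcon
    have hsub2 : Ioo (max 0 (t - δ)) t ⊆ Ioo (0:ℝ) (M:ℝ) \ S := by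
      intro x hx
      refine ⟨⟨lt_of_le_of_lt (le_max_left _ _) hx.1, hx.2.trans ht.2⟩, fun hxS => ?_⟩
      exact absurd hx.2 (not_lt.2 (hcon x hxS (lt_of_le_of_lt (le_max_right _ _) hx.1)))
    have h0 : volume (Ioo (max 0 (t - δ)) t) = 0 := measure_mono_null hsub2 hnull
    rw [Real.volume_Ioo, ENNReal.ofReal_eq_zero] at h0
    have hlt : max 0 (t - δ) < t := max_lt ht.1 (by linarith)
    linarith
  have hval0 : ∀ x ∈ S, ⇑u x = 0 ∨ ⇑u x = 1 := by
    intro x hx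
    have hcl : (⇑u x) ∈ ({0, 1} : Set ℝ) := by
      refine ((Set.finite_singleton (1:ℝ)).insert 0).isClosed.mem_of_tendsto (htendS x hx)
        (Eventually.of_forall fun k => ?_)
      rcases hvval (ns k) x hx.1 with h | h <;> simp [h]
    simpa using hcl
  have hvarS : eVariationOn (⇑u) S ≤ (M : ℝ≥0∞) := by
    by_contra hcon
    push_neg at hcon
    obtain ⟨k, hk⟩ := (eVariationOn.lowerSemicontinuous_aux
      (F := fun k => v (ns k)) (p := atTop) (f := ⇑u) (s := S) htendS hcon).exists
    exact absurd ((eVariationOn.mono (v (ns k)) hSsub).trans (hvvar (ns k))) (not_le.2 hk)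
  -- extension to all of (0,M)
  set C : ℝ → Prop := fun t => ∀ δ : ℝ, 0 < δ → ∃ s, s ∈ S ∧ t - δ < s ∧ s < t ∧ ⇑u s = 1
    with hCdef
  set w : ℝ → ℝ := fun t => if t ∈ S then ⇑u t else if C t then 1 else 0 with hwdef
  have hwS : ∀ x ∈ S, w x = ⇑u x := by
    intro x hx
    simp only [hwdef]
    rw [if_pos hx]
  have hP : ∀ t ∈ Ioo (0:ℝ) (M:ℝ), ∀ δ : ℝ, 0 < δ →
      ∃ s, s ∈ S ∧ t - δ < s ∧ s ≤ t ∧ ⇑u s = w t := by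
    intro t ht δ hδ
    by_cases htS : t ∈ S
    · exact ⟨t, htS, by linarith, le_refl t, (hwS t htS).symm⟩
    · by_cases hC : C t
      · obtain ⟨s, hs1, hs2, hs3, hs4⟩ := hC δ hδ
        refine ⟨s, hs1, hs2, hs3.le, ?_⟩
        simp only [hwdef]
        rw [if_neg htS, if_pos hC, hs4]
      · have hC' := hC
        simp only [hCdef] at hC'
        push_neg at hC'
        obtain ⟨δ₀, hδ₀, hδ₀'⟩ := hC'
        obtain ⟨s, hs1, hs2, hs3⟩ := hacc t ht (min δ δ₀) (lt_min hδ hδ₀)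
        have hmin1 : min δ δ₀ ≤ δ := min_le_left δ δ₀
        have hmin2 : min δ δ₀ ≤ δ₀ := min_le_right δ δ₀
        have hu0 : ⇑u s = 0 := by
          rcases hval0 s hs1 with h | h
          · exact h
          · exact absurd h (hδ₀' s hs1 (by linarith) hs3)
        refine ⟨s, hs1, by linarith, hs3.le, ?_⟩
        rw [hu0]
        simp only [hwdef]
        rw [if_neg htS, if_neg hC]
  refine ⟨⟨w, ?_, ?_, ?_⟩, hKin⟩
  · have : ∀ᵐ x ∂μ, ⇑u x = w x := by
      rw [ae_iff, hμdef, Measure.restrict_apply' measurableSet_Ioo]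
      refine measure_mono_null (fun x hx => ?_) hnull
      exact ⟨hx.2, fun hS => hx.1 (hwS x hS).symm⟩
    exact this
  · intro t ht
    by_cases htS : t ∈ S
    · rw [hwS t htS]; exact hval0 t htS
    · by_cases hC : C t
      · right
        simp only [hwdef]
        rw [if_neg htS, if_pos hC]
      · left
        simp only [hwdef]
        rw [if_neg htS, if_neg hC]
  · exact (evar_le_of_approx hP).trans hvarS
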